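/- Let q₁ and q₂ be coprime positive integers, q = q₁q₂, and let χ₁ be a primitive Dirichlet character modulo q₁. Then for every integer k, Σ_{1 ≤ a ≤ q, gcd(a,q)=1} χ₁(a) e^{2πi a k/q} = \overline{χ₁}(k) · τ(χ₁) · χ₁(q₂) · c_{q₂}(k), where τ(χ₁) = Σ_{m=1}^{q₁} χ₁(m) e^{2πi m/q₁} is the Gauss sum and c_{q₂}(k) = Σ_{1 ≤ a₂ ≤ q₂, gcd(a₂,q₂)=1} e^{2πi a₂ k/q₂} is the Ramanujan sum. -/

import Mathlib

open Finset

private lemma unit_ne_zero {n : ℕ} [NeZero n] (hne : n ≠ 1) (u : (ZMod n)ˣ) :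
    ((u : ZMod n)) ≠ 0 := by
  intro h1
  have hn : 0 < n := Nat.pos_of_ne_zero (NeZero.ne n)
  haveI : Fact (1 < n) := ⟨by omega⟩
  have := isUnit_zero_iff.mp (h1 ▸ u.isUnit)
  exact one_ne_zero this.symm

private lemma sum_Icc_eq_sum_zmod {n : ℕ} [NeZero n] (F : ZMod n → ℂ) :
    ∑ a ∈ Finset.Icc 1 n, F ((a : ℕ) : ZMod n) = ∑ x : ZMod n, F x := by
  have hn : 0 < n := Nat.pos_of_ne_zero (NeZero.ne n)
  refine Finset.sum_nbij' (fun a => ((a : ℕ) : ZMod n))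
    (fun x => if x.val = 0 then n else x.val) (fun a _ => Finset.mem_univ _) ?_ ?_ ?_ (fun a _ => rfl)
  · intro x _
    by_cases h : x.val = 0 <;> simp only [h, if_true, if_false, Finset.mem_Icc]
    · exact ⟨hn, le_rfl⟩
    · exact ⟨Nat.one_le_iff_ne_zero.2 h, (ZMod.val_lt x).le⟩
  · intro a ha
    rw [Finset.mem_Icc] at ha
    rcases eq_or_lt_of_le ha.2 with h | h
    · subst h; simp [ZMod.natCast_self]
    · simp only [ZMod.val_natCast_of_lt h]
      rw [if_neg (by omega)]
  · intro x _
    by_cases h : x.val = 0 <;> simp only [h, if_true, if_false]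
    · rw [ZMod.natCast_self]
      exact ((ZMod.val_eq_zero x).mp h).symm
    · exact ZMod.natCast_zmod_val x

private lemma sum_Icc_filter_eq_sum_units {n : ℕ} [NeZero n] (F : ZMod n → ℂ) :
    ∑ a ∈ (Finset.Icc 1 n).filter (fun a : ℕ => Nat.gcd a n = 1),
      F ((a : ℕ) : ZMod n) = ∑ u : (ZMod n)ˣ, F u := by
  have hn : 0 < n := Nat.pos_of_ne_zero (NeZero.ne n)
  refine Finset.sum_nbij' (fun a => if h : Nat.Coprime a n then ZMod.unitOfCoprime a h else 1)
    (fun u => if (u : ZMod n).val = 0 then n else (u : ZMod n).val)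
    (fun a _ => Finset.mem_univ _) ?_ ?_ ?_ ?_
  · intro u _
    by_cases h : (u : ZMod n).val = 0 <;>
      simp only [h, if_true, if_false, Finset.mem_filter, Finset.mem_Icc]
    · have hn1 : n = 1 := by
        by_contra hne
        exact unit_ne_zero hne u ((ZMod.val_eq_zero _).mp h)
      subst hn1
      simp
    · exact ⟨⟨Nat.one_le_iff_ne_zero.2 h, (ZMod.val_lt _).le⟩, ZMod.val_coe_unit_coprime u⟩
  · intro a ha
    rw [Finset.mem_filter, Finset.mem_Icc] at ha
    have hc : Nat.Coprime a n := ha.2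
    simp only [dif_pos hc]
    have : ((ZMod.unitOfCoprime a hc : (ZMod n)ˣ) : ZMod n) = (a : ZMod n) := rfl
    rw [this]
    rcases eq_or_lt_of_le ha.1.2 with h | h
    · subst h; simp [ZMod.natCast_self]
    · simp only [ZMod.val_natCast_of_lt h]
      rw [if_neg (by omega)]
  · intro u _
    by_cases h : (u : ZMod n).val = 0 <;> simp only [h, if_true, if_false]
    · have hn1 : n = 1 := by
        by_contra hne
        exact unit_ne_zero hne u ((ZMod.val_eq_zero _).mp h)
      subst hn1
      apply Subsingleton.elim
    · have hc : Nat.Coprime (u : ZMod n).val n := ZMod.val_coe_unit_coprime u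
      simp only [dif_pos hc]
      ext
      simp [ZMod.natCast_zmod_val]
  · intro a ha
    rw [Finset.mem_filter, Finset.mem_Icc] at ha
    simp only [dif_pos ha.2]
    rfl

private lemma sum_units_eq_sum {R : Type*} [CommRing R] [Fintype R] [DecidableEq R]
    (f : R → ℂ) (hf : ∀ x : R, ¬IsUnit x → f x = 0) :
    ∑ u : Rˣ, f u = ∑ x : R, f x := by
  classical
  have h1 : ∑ x ∈ Finset.univ.image (Units.val : Rˣ → R), f x = ∑ u : Rˣ, f u :=
    Finset.sum_image (fun u _ v _ h => Units.ext h)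
  rw [← h1]
  refine Finset.sum_subset (Finset.subset_univ _) ?_
  intro x _ hx
  refine hf x fun hu => hx ?_
  exact Finset.mem_image.mpr ⟨hu.unit, Finset.mem_univ _, hu.unit_spec⟩

/-- for coprime positive `q₁, q₂`, `q = q₁q₂`, a primitive Dirichlet character
`χ₁ (mod q₁)` and any integer `k`,
`∑_{1≤a≤q, (a,q)=1} χ₁(a) e(ak/q) = \overline{χ₁}(k) τ(χ₁) χ₁(q₂) c_{q₂}(k)`,
where `τ(χ₁)` is the Gauss sum and `c_{q₂}(k)` the Ramanujan sum. -/
theorem character_sum_factorization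
    (q₁ q₂ : ℕ) (hq₁ : 0 < q₁) (hq₂ : 0 < q₂) (hcop : Nat.Coprime q₁ q₂)
    (χ₁ : DirichletCharacter ℂ q₁) (hχ₁ : χ₁.IsPrimitive) (k : ℤ) :
    ∑ a ∈ (Finset.Icc 1 (q₁ * q₂)).filter (fun a : ℕ => Nat.gcd a (q₁ * q₂) = 1),
        χ₁ ((a : ℕ) : ZMod q₁) *
          Complex.exp (2 * Real.pi * Complex.I * a * k / (q₁ * q₂))
      = (starRingEnd ℂ) (χ₁ ((k : ℤ) : ZMod q₁)) *
          (∑ m ∈ Finset.Icc 1 q₁,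
            χ₁ ((m : ℕ) : ZMod q₁) * Complex.exp (2 * Real.pi * Complex.I * m / q₁)) *
          χ₁ ((q₂ : ℕ) : ZMod q₁) *
          ∑ a₂ ∈ (Finset.Icc 1 q₂).filter (fun a : ℕ => Nat.gcd a q₂ = 1),
            Complex.exp (2 * Real.pi * Complex.I * a₂ * k / q₂) := by
  classical
  haveI : NeZero q₁ := ⟨hq₁.ne'⟩
  haveI : NeZero q₂ := ⟨hq₂.ne'⟩
  haveI : NeZero (q₁ * q₂) := ⟨Nat.mul_ne_zero hq₁.ne' hq₂.ne'⟩
  have d₁ : q₁ ∣ q₁ * q₂ := dvd_mul_right q₁ q₂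
  have d₂ : q₂ ∣ q₁ * q₂ := dvd_mul_left q₂ q₁
  set A : ℤ := Int.gcdA q₁ q₂ with hA
  set B : ℤ := Int.gcdB q₁ q₂ with hB
  have hAB : (q₁ : ℤ) * A + (q₂ : ℤ) * B = 1 := by
    have := Int.gcd_eq_gcd_ab (q₁ : ℤ) (q₂ : ℤ)
    rw [Int.gcd_natCast_natCast] at this
    rw [hcop] at this
    exact_mod_cast this.symm
  have hq₁C : (q₁ : ℂ) ≠ 0 := Nat.cast_ne_zero.mpr hq₁.ne'
  have hq₂C : (q₂ : ℂ) ≠ 0 := Nat.cast_ne_zero.mpr hq₂.ne'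
  -- exponential splitting at the integer level
  have exp_split : ∀ j : ℤ,
      Complex.exp (2 * Real.pi * Complex.I * j / ((q₁ : ℂ) * q₂)) =
        Complex.exp (2 * Real.pi * Complex.I * (B * j) / q₁) *
          Complex.exp (2 * Real.pi * Complex.I * (A * j) / q₂) := by
    intro j
    rw [← Complex.exp_add]
    congr 1
    have key : (q₁ : ℂ) * (A : ℂ) + (q₂ : ℂ) * (B : ℂ) = 1 := by exact_mod_cast hAB
    have h12 : (q₁ : ℂ) * q₂ ≠ 0 := mul_ne_zero hq₁C hq₂C
    field_simp
    linear_combination (-(j : ℂ)) * key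
  -- additive character splitting
  have psi_split : ∀ x : ZMod (q₁ * q₂),
      ZMod.stdAddChar x =
        ZMod.stdAddChar ((B : ZMod q₁) * ZMod.castHom d₁ (ZMod q₁) x) *
          ZMod.stdAddChar ((A : ZMod q₂) * ZMod.castHom d₂ (ZMod q₂) x) := by
    intro x
    obtain ⟨j, rfl⟩ : ∃ j : ℤ, x = (j : ZMod (q₁ * q₂)) := ⟨x.val, by simp [ZMod.natCast_zmod_val]⟩
    rw [map_intCast (ZMod.castHom d₁ (ZMod q₁)) j, map_intCast (ZMod.castHom d₂ (ZMod q₂)) j]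
    have h1 : (B : ZMod q₁) * ((j : ℤ) : ZMod q₁) = ((B * j : ℤ) : ZMod q₁) := by push_cast; ring
    have h2 : (A : ZMod q₂) * ((j : ℤ) : ZMod q₂) = ((A * j : ℤ) : ZMod q₂) := by push_cast; ring
    rw [h1, h2, ZMod.stdAddChar_coe, ZMod.stdAddChar_coe, ZMod.stdAddChar_coe]
    have h3 := exp_split j
    push_cast at h3 ⊢
    convert h3 using 2 <;> ring
  -- CRT injectivity
  have crt_inj : ∀ x y : ZMod (q₁ * q₂),
      ZMod.castHom d₁ (ZMod q₁) x = ZMod.castHom d₁ (ZMod q₁) y →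
      ZMod.castHom d₂ (ZMod q₂) x = ZMod.castHom d₂ (ZMod q₂) y → x = y := by
    intro x y h1 h2
    have e1 : ∀ (z : ZMod (q₁ * q₂)), ZMod.castHom d₁ (ZMod q₁) z = ((z.val : ℕ) : ZMod q₁) := by
      intro z
      rw [ZMod.castHom_apply, ZMod.natCast_val]
    have e2 : ∀ (z : ZMod (q₁ * q₂)), ZMod.castHom d₂ (ZMod q₂) z = ((z.val : ℕ) : ZMod q₂) := by
      intro z
      rw [ZMod.castHom_apply, ZMod.natCast_val]
    rw [e1 x, e1 y, ZMod.natCast_eq_natCast_iff] at h1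
    rw [e2 x, e2 y, ZMod.natCast_eq_natCast_iff] at h2
    have h3 : x.val ≡ y.val [MOD q₁ * q₂] :=
      (Nat.modEq_and_modEq_iff_modEq_mul hcop).mp ⟨h1, h2⟩
    have := (ZMod.natCast_eq_natCast_iff _ _ _).mpr h3
    rwa [ZMod.natCast_zmod_val, ZMod.natCast_zmod_val] at this
  -- bijection on units
  set Φ : (ZMod (q₁ * q₂))ˣ → (ZMod q₁)ˣ × (ZMod q₂)ˣ :=
    fun u => (ZMod.unitsMap d₁ u, ZMod.unitsMap d₂ u) with hΦ
  have Φval₁ : ∀ u : (ZMod (q₁ * q₂))ˣ,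
      ((Φ u).1 : ZMod q₁) = ZMod.castHom d₁ (ZMod q₁) (u : ZMod (q₁ * q₂)) := fun u => rfl
  have Φval₂ : ∀ u : (ZMod (q₁ * q₂))ˣ,
      ((Φ u).2 : ZMod q₂) = ZMod.castHom d₂ (ZMod q₂) (u : ZMod (q₁ * q₂)) := fun u => rfl
  have hΦinj : Function.Injective Φ := by
    intro u v huv
    have h1 := congrArg (fun p => ((p.1 : ZMod q₁))) huv
    have h2 := congrArg (fun p => ((p.2 : ZMod q₂))) huv
    simp only [Φval₁, Φval₂] at h1 h2
    exact Units.ext (crt_inj _ _ h1 h2)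
  have hΦbij : Function.Bijective Φ := by
    refine (Fintype.bijective_iff_injective_and_card Φ).mpr ⟨hΦinj, ?_⟩
    rw [Fintype.card_prod, ZMod.card_units_eq_totient, ZMod.card_units_eq_totient,
      ZMod.card_units_eq_totient, Nat.totient_mul hcop]
  -- notation
  set ψ : AddChar (ZMod (q₁ * q₂)) ℂ := ZMod.stdAddChar with hψ
  set ψ₁ : AddChar (ZMod q₁) ℂ := ZMod.stdAddChar with hψ₁
  set ψ₂ : AddChar (ZMod q₂) ℂ := ZMod.stdAddChar with hψ₂
  set b₁ : ZMod q₁ := ((B * k : ℤ) : ZMod q₁) with hb₁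
  set b₂ : ZMod q₂ := ((A * k : ℤ) : ZMod q₂) with hb₂
  set F : ZMod (q₁ * q₂) → ℂ :=
    fun x => χ₁ (ZMod.castHom d₁ (ZMod q₁) x) * ψ ((k : ZMod (q₁ * q₂)) * x) with hF
  -- Step 1 : rewrite LHS as a sum over units of ZMod (q₁ q₂)
  have step1 : ∑ a ∈ (Finset.Icc 1 (q₁ * q₂)).filter (fun a : ℕ => Nat.gcd a (q₁ * q₂) = 1),
        χ₁ ((a : ℕ) : ZMod q₁) * Complex.exp (2 * Real.pi * Complex.I * a * k / (q₁ * q₂))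
      = ∑ u : (ZMod (q₁ * q₂))ˣ, F u := by
    rw [← sum_Icc_filter_eq_sum_units F]
    refine Finset.sum_congr rfl fun a _ => ?_
    rw [hF]
    simp only [map_natCast]
    congr 1
    have h1 : ((k : ZMod (q₁ * q₂)) * ((a : ℕ) : ZMod (q₁ * q₂))) = ((k * a : ℤ) : ZMod (q₁ * q₂)) := by
      push_cast; ring
    rw [h1, hψ, ZMod.stdAddChar_coe]
    congr 1
    push_cast
    ring
  -- Step 2 : split each term via CRT
  have step2 : ∑ u : (ZMod (q₁ * q₂))ˣ, F u
      = ∑ p : (ZMod q₁)ˣ × (ZMod q₂)ˣ, χ₁ (p.1 : ZMod q₁) * ψ₁ (b₁ * p.1) * ψ₂ (b₂ * p.2) := by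
    rw [← Fintype.sum_bijective Φ hΦbij _ _ (fun u => ?_)]
    rw [hF]
    simp only [Φval₁, Φval₂]
    rw [psi_split ((k : ZMod (q₁ * q₂)) * u)]
    rw [map_mul (ZMod.castHom d₁ (ZMod q₁)) ((k : ℤ) : ZMod (q₁ * q₂)) (u : ZMod (q₁ * q₂)),
      map_mul (ZMod.castHom d₂ (ZMod q₂)) ((k : ℤ) : ZMod (q₁ * q₂)) (u : ZMod (q₁ * q₂)),
      map_intCast (ZMod.castHom d₁ (ZMod q₁)) k, map_intCast (ZMod.castHom d₂ (ZMod q₂)) k]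
    have h1 : (B : ZMod q₁) * ((k : ZMod q₁) * ZMod.castHom d₁ (ZMod q₁) (u : ZMod (q₁ * q₂)))
        = b₁ * ZMod.castHom d₁ (ZMod q₁) (u : ZMod (q₁ * q₂)) := by
      rw [hb₁]; push_cast; ring
    have h2 : (A : ZMod q₂) * ((k : ZMod q₂) * ZMod.castHom d₂ (ZMod q₂) (u : ZMod (q₁ * q₂)))
        = b₂ * ZMod.castHom d₂ (ZMod q₂) (u : ZMod (q₁ * q₂)) := by
      rw [hb₂]; push_cast; ring
    rw [h1, h2]
    show _ = χ₁ (ZMod.castHom d₁ (ZMod q₁) (u : ZMod (q₁ * q₂))) *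
        ψ₁ (b₁ * ZMod.castHom d₁ (ZMod q₁) (u : ZMod (q₁ * q₂))) *
        ψ₂ (b₂ * ZMod.castHom d₂ (ZMod q₂) (u : ZMod (q₁ * q₂)))
    ring
  -- Step 3 : factor the double sum
  have step3 : ∑ p : (ZMod q₁)ˣ × (ZMod q₂)ˣ, χ₁ (p.1 : ZMod q₁) * ψ₁ (b₁ * p.1) * ψ₂ (b₂ * p.2)
      = (∑ u₁ : (ZMod q₁)ˣ, χ₁ (u₁ : ZMod q₁) * ψ₁ (b₁ * u₁)) *
        (∑ u₂ : (ZMod q₂)ˣ, ψ₂ (b₂ * u₂)) := by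
    rw [Finset.sum_mul_sum]
    rw [Fintype.sum_prod_type]
  -- Factor 1 : Gauss sum evaluation
  have fac1 : (∑ u₁ : (ZMod q₁)ˣ, χ₁ (u₁ : ZMod q₁) * ψ₁ (b₁ * u₁))
      = χ₁⁻¹ b₁ * gaussSum χ₁ ψ₁ := by
    have e1 : (∑ u₁ : (ZMod q₁)ˣ, χ₁ (u₁ : ZMod q₁) * ψ₁ (b₁ * u₁))
        = ∑ x : ZMod q₁, χ₁ x * ψ₁ (b₁ * x) :=
      sum_units_eq_sum (fun x => χ₁ x * ψ₁ (b₁ * x))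
        (fun x hx => by
          show χ₁ x * ψ₁ (b₁ * x) = 0
          rw [MulChar.map_nonunit χ₁ hx, zero_mul])
    have e2 : ∑ x : ZMod q₁, χ₁ x * ψ₁ (b₁ * x) = gaussSum χ₁ (ψ₁.mulShift b₁) := by
      simp only [gaussSum, AddChar.mulShift_apply]
    rw [e1, e2, gaussSum_mulShift_of_isPrimitive ψ₁ hχ₁ b₁]
  -- χ₁⁻¹ b₁ identification
  have hBq₂ : ((B : ℤ) : ZMod q₁) * ((q₂ : ℕ) : ZMod q₁) = 1 := by
    have h0 := congrArg (fun z : ℤ => (z : ZMod q₁)) hAB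
    push_cast at h0
    rw [ZMod.natCast_self] at h0
    rw [zero_mul, zero_add] at h0
    rw [mul_comm] at h0
    exact h0
  have hq₂unit : IsUnit ((q₂ : ℕ) : ZMod q₁) :=
    IsUnit.of_mul_eq_one _ (by rw [mul_comm]; exact hBq₂)
  have hinvq₂ : χ₁⁻¹ ((q₂ : ℕ) : ZMod q₁) * χ₁ ((q₂ : ℕ) : ZMod q₁) = 1 := by
    have h : (χ₁⁻¹ * χ₁) ((q₂ : ℕ) : ZMod q₁) = 1 := by
      rw [inv_mul_cancel]
      exact MulChar.one_apply hq₂unit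
    rwa [MulChar.coeToFun_mul, Pi.mul_apply] at h
  have hinvB : χ₁⁻¹ ((B : ℤ) : ZMod q₁) = χ₁ ((q₂ : ℕ) : ZMod q₁) := by
    have h4 : χ₁⁻¹ ((B : ℤ) : ZMod q₁) * χ₁⁻¹ ((q₂ : ℕ) : ZMod q₁) = 1 := by
      rw [← map_mul, hBq₂, map_one]
    calc χ₁⁻¹ ((B : ℤ) : ZMod q₁)
        = χ₁⁻¹ ((B : ℤ) : ZMod q₁) * (χ₁⁻¹ ((q₂ : ℕ) : ZMod q₁) * χ₁ ((q₂ : ℕ) : ZMod q₁)) := by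
          rw [hinvq₂, mul_one]
      _ = (χ₁⁻¹ ((B : ℤ) : ZMod q₁) * χ₁⁻¹ ((q₂ : ℕ) : ZMod q₁)) * χ₁ ((q₂ : ℕ) : ZMod q₁) := by
          ring
      _ = χ₁ ((q₂ : ℕ) : ZMod q₁) := by rw [h4, one_mul]
  have hinvb₁ : χ₁⁻¹ b₁ = (starRingEnd ℂ) (χ₁ ((k : ℤ) : ZMod q₁)) * χ₁ ((q₂ : ℕ) : ZMod q₁) := by
    have h5 : b₁ = ((B : ℤ) : ZMod q₁) * ((k : ℤ) : ZMod q₁) := by rw [hb₁]; push_cast; ring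
    rw [h5, map_mul, hinvB]
    have h6 : χ₁⁻¹ ((k : ℤ) : ZMod q₁) = (starRingEnd ℂ) (χ₁ ((k : ℤ) : ZMod q₁)) := by
      rw [← MulChar.star_apply' χ₁ ((k : ℤ) : ZMod q₁)]
      rfl
    rw [h6]
    ring
  -- Gauss sum matches the middle factor
  have hG : (∑ m ∈ Finset.Icc 1 q₁,
      χ₁ ((m : ℕ) : ZMod q₁) * Complex.exp (2 * Real.pi * Complex.I * m / q₁))
      = gaussSum χ₁ ψ₁ := by
    have e2 : ∑ m ∈ Finset.Icc 1 q₁, (fun x : ZMod q₁ => χ₁ x * ψ₁ x) ((m : ℕ) : ZMod q₁)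
        = ∑ x : ZMod q₁, χ₁ x * ψ₁ x := by
      exact sum_Icc_eq_sum_zmod (fun x : ZMod q₁ => χ₁ x * ψ₁ x)
    calc (∑ m ∈ Finset.Icc 1 q₁,
        χ₁ ((m : ℕ) : ZMod q₁) * Complex.exp (2 * Real.pi * Complex.I * m / q₁))
        = ∑ m ∈ Finset.Icc 1 q₁, (fun x : ZMod q₁ => χ₁ x * ψ₁ x) ((m : ℕ) : ZMod q₁) := by
          refine Finset.sum_congr rfl fun m _ => ?_
          show χ₁ ((m : ℕ) : ZMod q₁) * Complex.exp (2 * Real.pi * Complex.I * m / q₁)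
            = χ₁ ((m : ℕ) : ZMod q₁) * ψ₁ ((m : ℕ) : ZMod q₁)
          congr 1
          have h1 : ((m : ℕ) : ZMod q₁) = ((m : ℤ) : ZMod q₁) := by push_cast; ring
          rw [h1, hψ₁, ZMod.stdAddChar_coe]
          norm_cast
      _ = ∑ x : ZMod q₁, χ₁ x * ψ₁ x := e2
      _ = gaussSum χ₁ ψ₁ := rfl
  -- Factor 2 : Ramanujan sum
  have hAq₁ : ((A : ℤ) : ZMod q₂) * ((q₁ : ℕ) : ZMod q₂) = 1 := by
    have h0 := congrArg (fun z : ℤ => (z : ZMod q₂)) hAB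
    push_cast at h0
    rw [ZMod.natCast_self] at h0
    rw [zero_mul, add_zero] at h0
    rw [mul_comm] at h0
    exact h0
  have hAunit : IsUnit ((A : ℤ) : ZMod q₂) := IsUnit.of_mul_eq_one _ hAq₁
  have fac2 : (∑ u₂ : (ZMod q₂)ˣ, ψ₂ ((k : ZMod q₂) * u₂))
      = ∑ u₂ : (ZMod q₂)ˣ, ψ₂ (b₂ * u₂) := by
    refine Fintype.sum_equiv (Equiv.mulLeft hAunit.unit⁻¹) _ _ (fun v => ?_)
    have hval : ((Equiv.mulLeft hAunit.unit⁻¹ v : (ZMod q₂)ˣ) : ZMod q₂)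
        = ((hAunit.unit⁻¹ : (ZMod q₂)ˣ) : ZMod q₂) * (v : ZMod q₂) := rfl
    rw [hval]
    congr 1
    have h9 : ((A : ℤ) : ZMod q₂) * ((hAunit.unit⁻¹ : (ZMod q₂)ˣ) : ZMod q₂) = 1 := by
      have h10 := Units.mul_inv hAunit.unit
      rwa [hAunit.unit_spec] at h10
    have h8 : b₂ * (((hAunit.unit⁻¹ : (ZMod q₂)ˣ) : ZMod q₂) * (v : ZMod q₂))
        = (((A : ℤ) : ZMod q₂) * ((hAunit.unit⁻¹ : (ZMod q₂)ˣ) : ZMod q₂)) *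
          (((k : ℤ) : ZMod q₂) * (v : ZMod q₂)) := by
      rw [hb₂]; push_cast; ring
    rw [h8, h9, one_mul]
  have hR : (∑ u₂ : (ZMod q₂)ˣ, ψ₂ ((k : ZMod q₂) * u₂))
      = ∑ a₂ ∈ (Finset.Icc 1 q₂).filter (fun a : ℕ => Nat.gcd a q₂ = 1),
          Complex.exp (2 * Real.pi * Complex.I * a₂ * k / q₂) := by
    have e3 : ∑ a ∈ (Finset.Icc 1 q₂).filter (fun a : ℕ => Nat.gcd a q₂ = 1),
        (fun x : ZMod q₂ => ψ₂ ((k : ZMod q₂) * x)) ((a : ℕ) : ZMod q₂)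
        = ∑ u : (ZMod q₂)ˣ, ψ₂ ((k : ZMod q₂) * u) := by
      exact sum_Icc_filter_eq_sum_units (fun x : ZMod q₂ => ψ₂ ((k : ZMod q₂) * x))
    rw [← e3]
    refine Finset.sum_congr rfl fun a _ => ?_
    show ψ₂ ((k : ZMod q₂) * ((a : ℕ) : ZMod q₂))
      = Complex.exp (2 * Real.pi * Complex.I * a * k / q₂)
    have h1 : ((k : ZMod q₂) * ((a : ℕ) : ZMod q₂)) = ((k * a : ℤ) : ZMod q₂) := by
      push_cast; ring
    rw [h1, hψ₂, ZMod.stdAddChar_coe]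
    congr 1
    push_cast
    ring
  -- put everything together
  rw [step1, step2, step3, fac1, hinvb₁, hG.symm, ← fac2, hR]
  ring
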